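/- Let (G,κ) be a proper edge coloring of a tree with n vertices that uses at least 3 colors. Then |𝔊_κ| · (n − φ(n)) ≥ n², where φ denotes Euler's totient function. -/

import Mathlib

open scoped Classical

/-- A proper edge coloring of a finite simple graph `G` with colors `{1, …, k}`:
it assigns colors in `{1, …, k}` to edges, is surjective onto `{1, …, k}`, and
incident edges receive distinct colors. -/
def IsProperEdgeColoring {V : Type*} (G : SimpleGraph V) (k : ℕ) (κ : Sym2 V → ℕ) : Prop :=
  (∀ e ∈ G.edgeSet, κ e ∈ Finset.Icc 1 k) ∧
  (∀ a ∈ Finset.Icc 1 k, ∃ e ∈ G.edgeSet, κ e = a) ∧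
  (∀ u v w : V, G.Adj u v → G.Adj u w → v ≠ w → κ s(u, v) ≠ κ s(u, w))
/-- `IsToggle G κ a τ` says that the permutation `τ` is the product of the
transpositions `(i j)` over all edges `{i,j}` of `G` colored `a`: it swaps the two
endpoints of every edge colored `a` and fixes all other vertices. -/
def IsToggle {V : Type*} (G : SimpleGraph V) (κ : Sym2 V → ℕ) (a : ℕ) (τ : Equiv.Perm V) : Prop :=
  ∀ v w : V, v ≠ w → (τ v = w ↔ G.Adj v w ∧ κ s(v, w) = a)
/-- The coloring group `𝔊_κ`: the subgroup of `Sym(V)` generated by the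
permutations `τ_1, …, τ_k` associated to the colors `1, …, k`. -/
def coloringGroup {V : Type*} (G : SimpleGraph V) (k : ℕ) (κ : Sym2 V → ℕ) :
    Subgroup (Equiv.Perm V) :=
  Subgroup.closure { τ : Equiv.Perm V | ∃ a : ℕ, 1 ≤ a ∧ a ≤ k ∧ IsToggle G κ a τ }

namespace Stmt8Aux

open Equiv List

variable {V : Type*}

/-- swap associated to an unordered pair -/
noncomputable def sswap : Sym2 V → Equiv.Perm V :=
  Sym2.lift ⟨fun x y => Equiv.swap x y, fun x y => Equiv.swap_comm x y⟩

@[simp] lemma sswap_mk (x y : V) : sswap s(x, y) = Equiv.swap x y := rfl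

/-- product of swaps over a list of unordered pairs -/
noncomputable def pprod (l : List (Sym2 V)) : Equiv.Perm V := (l.map sswap).prod

@[simp] lemma pprod_nil : (pprod ([] : List (Sym2 V))) = 1 := rfl

lemma pprod_cons (e : Sym2 V) (l : List (Sym2 V)) :
    pprod (e :: l) = sswap e * pprod l := by
  simp [pprod]

/-- reachability along a list of unordered pairs -/
def Reach (l : List (Sym2 V)) : V → V → Prop :=
  Relation.ReflTransGen (fun p q => s(p, q) ∈ l)

lemma reach_symm {l : List (Sym2 V)} {a b : V} (h : Reach l a b) : Reach l b a :=
  (@Relation.ReflTransGen.stdSymm _ _ ⟨fun p q hpq => by rwa [Sym2.eq_swap] at hpq⟩).symm _ _ h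

lemma reach_mono {l l' : List (Sym2 V)} (hsub : ∀ e ∈ l, e ∈ l') {a b : V}
    (h : Reach l a b) : Reach l' a b :=
  Relation.ReflTransGen.mono (fun p q hm => hsub _ hm) a b h

lemma reach_refl (l : List (Sym2 V)) (a : V) : Reach l a a := Relation.ReflTransGen.refl

lemma reach_pprod_apply (l : List (Sym2 V)) : ∀ a : V, Reach l a (pprod l a) := by
  induction l with
  | nil => intro a; simpa using reach_refl [] a
  | cons e l ih =>
    intro a
    induction e using Sym2.inductionOn with
    | _ x y =>
      have h1 : Reach (s(x, y) :: l) a (pprod l a) :=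
        reach_mono (fun e he => List.mem_cons_of_mem _ he) (ih a)
      rw [pprod_cons, sswap_mk, Equiv.Perm.mul_apply]
      rcases eq_or_ne (pprod l a) x with hbx | hbx
      · refine h1.tail ?_
        rw [hbx, Equiv.swap_apply_left]
        show s(x, y) ∈ _
        exact List.mem_cons_self
      rcases eq_or_ne (pprod l a) y with hby | hby
      · refine h1.tail ?_
        rw [hby, Equiv.swap_apply_right]
        show s(y, x) ∈ _
        rw [Sym2.eq_swap]
        exact List.mem_cons_self
      · rwa [Equiv.swap_apply_of_ne_of_ne hbx hby]

lemma sameCycle_pprod_reach [Finite V] (l : List (Sym2 V)) {a b : V}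
    (h : (pprod l).SameCycle a b) : Reach l a b := by
  obtain ⟨i, -, hi⟩ := h.exists_pow_eq'
  induction i generalizing a with
  | zero => simp only [pow_zero, Equiv.Perm.coe_one, id_eq] at hi; exact hi ▸ reach_refl l a
  | succ i ih =>
    rw [pow_succ, Equiv.Perm.mul_apply] at hi
    exact (reach_pprod_apply l a).trans
      (ih ⟨(i : ℤ), by rw [zpow_natCast]; exact hi⟩ hi)

section Merge

variable [Finite V]

lemma key1 (P : Equiv.Perm V) {x y : V} (hxy : x ≠ y) (hns : ¬ P.SameCycle x y) :
    (Equiv.swap x y * P).SameCycle y x := by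
  set P' := Equiv.swap x y * P with hP'
  have hex : ∃ j, 0 < j ∧ (P ^ j) y = y :=
    ⟨orderOf P, orderOf_pos P, by rw [pow_orderOf_eq_one]; rfl⟩
  set m := Nat.find hex with hm
  obtain ⟨hmpos, hmy⟩ := Nat.find_spec hex
  have hlt : ∀ j, 0 < j → j < m → (P ^ j) y ≠ y := fun j h1 h2 hy =>
    Nat.find_min hex h2 ⟨h1, hy⟩
  have horb : ∀ j : ℕ, (P ^ j) y ≠ x := by
    intro j hj
    exact hns (Equiv.Perm.SameCycle.symm ⟨(j : ℤ), by rw [zpow_natCast]; exact hj⟩)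
  have hiter : ∀ j, j < m → (P' ^ j) y = (P ^ j) y := by
    intro j
    induction j with
    | zero => simp
    | succ j ih =>
      intro hjm
      have hj : j < m := Nat.lt_of_succ_lt hjm
      rw [pow_succ', Equiv.Perm.mul_apply, ih hj, hP', Equiv.Perm.mul_apply]
      have hz : P ((P ^ j) y) = (P ^ (j + 1)) y := by
        rw [pow_succ', Equiv.Perm.mul_apply]
      rw [hz]
      exact Equiv.swap_apply_of_ne_of_ne (horb (j + 1)) (hlt (j + 1) (Nat.succ_pos j) hjm)
  have hfin : (P' ^ m) y = x := by
    obtain ⟨m0, hm0⟩ : ∃ m0, m = m0 + 1 := ⟨m - 1, (Nat.succ_pred_eq_of_pos hmpos).symm⟩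
    rw [hm0, pow_succ', Equiv.Perm.mul_apply, hiter m0 (by omega), hP',
      Equiv.Perm.mul_apply]
    have hz : P ((P ^ m0) y) = (P ^ (m0 + 1)) y := by
      rw [pow_succ', Equiv.Perm.mul_apply]
    rw [hz, ← hm0, hmy, Equiv.swap_apply_right]
  exact ⟨(m : ℤ), by rwa [zpow_natCast]⟩

lemma key2 (P : Equiv.Perm V) {x y : V} (hxy : x ≠ y) (hns : ¬ P.SameCycle x y) (a : V) :
    (Equiv.swap x y * P).SameCycle a (P a) := by
  set P' := Equiv.swap x y * P with hP'
  have h1 : P' a = Equiv.swap x y (P a) := Equiv.Perm.mul_apply _ _ _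
  rcases eq_or_ne (P a) x with hax | hax
  · have h2 : P' a = y := by rw [h1, hax, Equiv.swap_apply_left]
    have hay : P'.SameCycle a y := ⟨1, by rwa [zpow_one]⟩
    rw [hax] at *
    exact hay.trans (key1 P hxy hns)
  rcases eq_or_ne (P a) y with hay | hay
  · have h2 : P' a = x := by rw [h1, hay, Equiv.swap_apply_right]
    have hax2 : P'.SameCycle a x := ⟨1, by rwa [zpow_one]⟩
    rw [hay]
    exact hax2.trans (key1 P hxy hns).symm
  · exact ⟨1, by rw [zpow_one, h1, Equiv.swap_apply_of_ne_of_ne hax hay]⟩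

lemma merge (P : Equiv.Perm V) {x y : V} (hxy : x ≠ y) (hns : ¬ P.SameCycle x y)
    {a b : V} (h : P.SameCycle a b) : (Equiv.swap x y * P).SameCycle a b := by
  obtain ⟨i, -, hi⟩ := h.exists_pow_eq'
  induction i generalizing a with
  | zero =>
    simp only [pow_zero, Equiv.Perm.coe_one, id_eq] at hi
    exact hi ▸ Equiv.Perm.SameCycle.refl _ _
  | succ i ih =>
    rw [pow_succ, Equiv.Perm.mul_apply] at hi
    exact (key2 P hxy hns a).trans
      (ih ⟨(i : ℤ), by rw [zpow_natCast]; exact hi⟩ hi)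

end Merge


section Graph

variable [Finite V] (G : SimpleGraph V)

lemma reach_to_minus (x y : V) (l : List (Sym2 V)) (hedges : ∀ e ∈ l, e ∈ G.edgeSet)
    (hnotin : s(x, y) ∉ l) {a b : V} (h : Reach l a b) :
    (G \ SimpleGraph.fromEdgeSet {s(x, y)}).Reachable a b := by
  induction h with
  | refl => exact SimpleGraph.Reachable.refl _
  | @tail c d hr hstep ih =>
    have hadj : G.Adj c d := (SimpleGraph.mem_edgeSet G).mp (hedges _ hstep)
    have hne : s(c, d) ≠ s(x, y) := fun hh => hnotin (hh ▸ hstep)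
    have hadj' : (G \ SimpleGraph.fromEdgeSet {s(x, y)}).Adj c d := by
      rw [SimpleGraph.sdiff_adj]
      refine ⟨hadj, ?_⟩
      rw [SimpleGraph.fromEdgeSet_adj]
      rintro ⟨hmem, -⟩
      exact hne (by simpa using hmem)
    exact ih.trans hadj'.reachable

lemma reach_sameCycle (hG : G.IsTree) :
    ∀ l : List (Sym2 V), l.Nodup → (∀ e ∈ l, e ∈ G.edgeSet) →
      ∀ a b : V, Reach l a b → (pprod l).SameCycle a b := by
  intro l
  induction l with
  | nil =>
    intro _ _ a b h
    have hab : a = b := by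
      induction h with
      | refl => rfl
      | tail hr hstep ih => exact absurd hstep List.not_mem_nil
    exact hab ▸ Equiv.Perm.SameCycle.refl _ _
  | cons e l ih =>
    induction e using Sym2.inductionOn with
    | _ x y =>
      intro hnd hedges a b h
      have hxyE : s(x, y) ∈ G.edgeSet := hedges _ (List.mem_cons_self)
      have hadj : G.Adj x y := (SimpleGraph.mem_edgeSet G).mp hxyE
      have hxy : x ≠ y := hadj.ne
      have hnotin : s(x, y) ∉ l := (List.nodup_cons.mp hnd).1
      have hndl : l.Nodup := (List.nodup_cons.mp hnd).2
      have hedl : ∀ e ∈ l, e ∈ G.edgeSet := fun e he => hedges _ (List.mem_cons_of_mem _ he)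
      have hns : ¬ (pprod l).SameCycle x y := by
        intro hsc
        have hreach := sameCycle_pprod_reach l hsc
        have hbr : G.IsBridge s(x, y) :=
          (SimpleGraph.isAcyclic_iff_forall_edge_isBridge.mp hG.IsAcyclic) hxyE
        exact (SimpleGraph.isBridge_iff.mp hbr) (reach_to_minus G x y l hedl hnotin hreach)
      rw [pprod_cons, sswap_mk]
      induction h with
      | refl => exact Equiv.Perm.SameCycle.refl _ _
      | @tail c d hr hstep ih2 =>
        refine ih2.trans ?_
        rcases List.mem_cons.mp hstep with heq | hmem
        · rcases Sym2.eq_iff.mp heq with ⟨rfl, rfl⟩ | ⟨rfl, rfl⟩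
          · exact (key1 (pprod l) hxy hns).symm
          · exact key1 (pprod l) hxy hns
        · exact merge (pprod l) hxy hns
            (ih hndl hedl c d (Relation.ReflTransGen.single hmem))

end Graph

section Toggle

variable [Finite V] {G : SimpleGraph V} {k : ℕ} {κ : Sym2 V → ℕ}

lemma pprod_fixed (l : List (Sym2 V)) (v : V) (hv : ∀ e ∈ l, v ∉ e) :
    pprod l v = v := by
  induction l with
  | nil => simp
  | cons e l ih =>
    induction e using Sym2.inductionOn with
    | _ x y =>
      rw [pprod_cons, sswap_mk, Equiv.Perm.mul_apply,
        ih fun e he => hv e (List.mem_cons_of_mem _ he)]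
      have hvm : v ∉ s(x, y) := hv _ (List.mem_cons_self)
      rw [Sym2.mem_iff] at hvm
      push_neg at hvm
      exact Equiv.swap_apply_of_ne_of_ne hvm.1 hvm.2

lemma no_share (hκ : IsProperEdgeColoring G k κ) {e f : Sym2 V} (he : e ∈ G.edgeSet)
    (hf : f ∈ G.edgeSet) (hc : κ e = κ f) (hne : e ≠ f) {v : V}
    (hve : v ∈ e) (hvf : v ∈ f) : False := by
  obtain ⟨z, rfl⟩ := Sym2.mem_iff_exists.mp hve
  obtain ⟨z', rfl⟩ := Sym2.mem_iff_exists.mp hvf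
  have hadj : G.Adj v z := (SimpleGraph.mem_edgeSet G).mp he
  have hadj' : G.Adj v z' := (SimpleGraph.mem_edgeSet G).mp hf
  have hzz : z ≠ z' := fun hh => hne (by rw [hh])
  exact hκ.2.2 v z z' hadj hadj' hzz hc

lemma pprod_toggle_eval (hκ : IsProperEdgeColoring G k κ) (a : ℕ) :
    ∀ l : List (Sym2 V), l.Nodup → (∀ e ∈ l, e ∈ G.edgeSet) → (∀ e ∈ l, κ e = a) →
      ∀ v w : V, v ≠ w → (pprod l v = w ↔ s(v, w) ∈ l) := by
  intro l
  induction l with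
  | nil =>
    intro _ _ _ v w hvw
    simp only [pprod_nil, Equiv.Perm.coe_one, id_eq, List.not_mem_nil, iff_false]
    exact hvw
  | cons e l ih =>
    induction e using Sym2.inductionOn with
    | _ x y =>
      intro hnd hedges hcol v w hvw
      have hxyE : s(x, y) ∈ G.edgeSet := hedges _ (List.mem_cons_self)
      have hadj : G.Adj x y := (SimpleGraph.mem_edgeSet G).mp hxyE
      have hnotin : s(x, y) ∉ l := (List.nodup_cons.mp hnd).1
      have hndl : l.Nodup := (List.nodup_cons.mp hnd).2
      have hedl : ∀ e ∈ l, e ∈ G.edgeSet := fun e he => hedges _ (List.mem_cons_of_mem _ he)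
      have hcll : ∀ e ∈ l, κ e = a := fun e he => hcol _ (List.mem_cons_of_mem _ he)
      have hcolxy : κ s(x, y) = a := hcol _ (List.mem_cons_self)
      by_cases hv : v ∈ s(x, y)
      · obtain ⟨o, ho⟩ := Sym2.mem_iff_exists.mp hv
        have hoE : s(v, o) ∈ G.edgeSet := ho ▸ hxyE
        have hvo : v ≠ o := ((SimpleGraph.mem_edgeSet G).mp hoE).ne
        have hvnl : ∀ f ∈ l, v ∉ f := by
          intro f hf hvf
          exact no_share hκ hoE (hedl f hf)
            (by rw [← ho, hcolxy, hcll f hf]) (fun hh => hnotin (by rw [ho, hh]; exact hf))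
            (Sym2.mem_mk_left v o) hvf
        have hplv : pprod l v = v := pprod_fixed l v hvnl
        have hswap : Equiv.swap x y v = o := by
          rcases Sym2.eq_iff.mp ho.symm with ⟨rfl, rfl⟩ | ⟨rfl, rfl⟩
          · exact Equiv.swap_apply_left _ _
          · exact Equiv.swap_apply_right _ _
        rw [pprod_cons, sswap_mk, Equiv.Perm.mul_apply, hplv, hswap]
        constructor
        · rintro rfl
          exact List.mem_cons.mpr (Or.inl ho.symm)
        · intro hmem
          rcases List.mem_cons.mp hmem with heq | hmem2
          · have heq2 : s(v, w) = s(v, o) := by rw [heq, ho]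
            exact ((Sym2.congr_right.mp heq2 : w = o)).symm
          · exact absurd (Sym2.mem_mk_left v w) (fun hh => hvnl _ hmem2 hh)
      · rw [Sym2.mem_iff] at hv
        push_neg at hv
        rcases eq_or_ne (pprod l v) v with hz | hz
        · rw [pprod_cons, sswap_mk, Equiv.Perm.mul_apply, hz,
            Equiv.swap_apply_of_ne_of_ne hv.1 hv.2]
          constructor
          · intro hvw2; exact absurd hvw2 hvw
          · intro hmem
            rcases List.mem_cons.mp hmem with heq | hmem2
            · exfalso
              have : v ∈ s(x, y) := heq ▸ Sym2.mem_mk_left v w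
              rw [Sym2.mem_iff] at this
              tauto
            · have hcontra := (ih hndl hedl hcll v w hvw).mpr hmem2
              rw [hz] at hcontra
              exact absurd hcontra hvw
        · have hmz : s(v, pprod l v) ∈ l := (ih hndl hedl hcll v _ (Ne.symm hz)).mp rfl
          have hzxy : pprod l v ∉ s(x, y) := by
            intro hmem
            exact no_share hκ (hedl _ hmz) hxyE
              (by rw [hcll _ hmz, hcolxy])
              (fun hh => hnotin (hh ▸ hmz))
              (Sym2.mem_mk_right v _) hmem
          rw [Sym2.mem_iff] at hzxy
          push_neg at hzxy
          rw [pprod_cons, sswap_mk, Equiv.Perm.mul_apply,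
            Equiv.swap_apply_of_ne_of_ne hzxy.1 hzxy.2]
          constructor
          · rintro rfl
            exact List.mem_cons_of_mem _ hmz
          · intro hmem
            rcases List.mem_cons.mp hmem with heq | hmem2
            · exfalso
              have : v ∈ s(x, y) := heq ▸ Sym2.mem_mk_left v w
              rw [Sym2.mem_iff] at this
              tauto
            · exact (ih hndl hedl hcll v w hvw).mpr hmem2

end Toggle

section DoubleCoset

variable {Gr : Type*} [Group Gr] [Fintype Gr]

/-- If `t ∈ H`, `K ≤ H`, then `|K|² ≤ |K ∩ K^t| * |H|` (double coset counting). -/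
lemma doubleCoset_bound (K H : Subgroup Gr) (t : Gr) (hKH : K ≤ H) (ht : t ∈ H) :
    Nat.card K * Nat.card K ≤
      Nat.card ↥(K ⊓ Subgroup.map (MulAut.conj t).toMonoidHom K) * Nat.card H := by
  classical
  set D := K ⊓ Subgroup.map (MulAut.conj t).toMonoidHom K with hD
  let KK : Finset Gr := Finset.univ.filter (fun g => g ∈ K)
  let DD : Finset Gr := Finset.univ.filter (fun g => g ∈ D)
  let HH : Finset Gr := Finset.univ.filter (fun g => g ∈ H)
  have hKKcard : KK.card = Nat.card K := by
    rw [Nat.card_eq_fintype_card, Fintype.card_subtype]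
  have hDDcard : DD.card = Nat.card ↥D := by
    rw [Nat.card_eq_fintype_card, Fintype.card_subtype]
  have hHHcard : HH.card = Nat.card H := by
    rw [Nat.card_eq_fintype_card, Fintype.card_subtype]
  set s : Finset (Gr × Gr) := KK ×ˢ KK with hs
  set f : Gr × Gr → Gr := fun q => q.1 * t * q.2 with hf
  have hfib : ∀ z ∈ s.image f, (s.filter (fun q => f q = z)).card ≤ DD.card := by
    intro z hz
    obtain ⟨q0, hq0s, hq0⟩ := Finset.mem_image.mp hz
    have hq01 : q0.1 ∈ K := (Finset.mem_filter.mp (Finset.mem_product.mp hq0s).1).2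
    have hq02 : q0.2 ∈ K := (Finset.mem_filter.mp (Finset.mem_product.mp hq0s).2).2
    apply Finset.card_le_card_of_injOn (fun q => q0.1⁻¹ * q.1)
    · intro q hq
      rw [Finset.mem_coe, Finset.mem_filter] at hq
      obtain ⟨hqs, hqz⟩ := hq
      have hq1 : q.1 ∈ K := (Finset.mem_filter.mp (Finset.mem_product.mp hqs).1).2
      have hq2 : q.2 ∈ K := (Finset.mem_filter.mp (Finset.mem_product.mp hqs).2).2
      have heq : q.1 * t * q.2 = q0.1 * t * q0.2 := hqz.trans hq0.symm
      have hkey : q0.1⁻¹ * q.1 = t * (q0.2 * q.2⁻¹) * t⁻¹ := by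
        have h1 : q.1 = q0.1 * t * q0.2 * q.2⁻¹ * t⁻¹ := by
          rw [← heq]; group
        rw [h1]; group
      refine Finset.mem_filter.mpr ⟨Finset.mem_univ _, ?_⟩
      rw [hD]
      refine Subgroup.mem_inf.mpr ⟨K.mul_mem (K.inv_mem hq01) hq1, ?_⟩
      refine Subgroup.mem_map.mpr ⟨q0.2 * q.2⁻¹, K.mul_mem hq02 (K.inv_mem hq2), ?_⟩
      rw [MulEquiv.coe_toMonoidHom, MulAut.conj_apply, ← hkey]
    · intro q hq q' hq' heq
      simp only [Finset.coe_filter, Set.mem_setOf_eq] at hq hq'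
      have h1 : q.1 = q'.1 := by
        have := mul_left_cancel (a := q0.1⁻¹) heq
        exact this
      have h2 : q.2 = q'.2 := by
        have hz1 : q.1 * t * q.2 = z := hq.2
        have hz2 : q'.1 * t * q'.2 = z := hq'.2
        rw [← h1] at hz2
        have := hz1.trans hz2.symm
        exact mul_left_cancel this
      exact Prod.ext h1 h2
  have himg : s.image f ⊆ HH := by
    intro z hz
    obtain ⟨q, hqs, rfl⟩ := Finset.mem_image.mp hz
    have hq1 : q.1 ∈ K := (Finset.mem_filter.mp (Finset.mem_product.mp hqs).1).2
    have hq2 : q.2 ∈ K := (Finset.mem_filter.mp (Finset.mem_product.mp hqs).2).2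
    exact Finset.mem_filter.mpr ⟨Finset.mem_univ _,
      H.mul_mem (H.mul_mem (hKH hq1) ht) (hKH hq2)⟩
  calc Nat.card K * Nat.card K = s.card := by rw [hs, Finset.card_product, hKKcard]
    _ ≤ DD.card * (s.image f).card := Finset.card_le_mul_card_image s DD.card hfib
    _ ≤ DD.card * HH.card := Nat.mul_le_mul_left _ (Finset.card_le_card himg)
    _ = Nat.card ↥D * Nat.card H := by rw [hDDcard, hHHcard]

end DoubleCoset

lemma totient_bound {n : ℕ} (hn : 2 ≤ n) : n / n.minFac ≤ n - n.totient := by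
  classical
  set p := n.minFac with hp
  have hp2 : 2 ≤ p := (Nat.minFac_prime (by omega)).two_le
  have hpdvd : p ∣ n := Nat.minFac_dvd n
  have hsub : (Finset.range (n / p)).image (fun j => p * j) ⊆
      (Finset.range n).filter (fun m => ¬ n.Coprime m) := by
    intro m hm
    obtain ⟨j, hj, rfl⟩ := Finset.mem_image.mp hm
    rw [Finset.mem_range] at hj
    refine Finset.mem_filter.mpr ⟨Finset.mem_range.mpr ?_, ?_⟩
    · calc p * j < p * (n / p) :=
            (Nat.mul_lt_mul_left (show 0 < p by omega)).mpr hj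
        _ = n := Nat.mul_div_cancel' hpdvd
    · intro hcop
      have hpg : p ∣ Nat.gcd n (p * j) := Nat.dvd_gcd hpdvd ⟨j, rfl⟩
      rw [Nat.Coprime] at hcop
      rw [hcop] at hpg
      exact absurd (Nat.le_of_dvd one_pos hpg) (by omega)
  have hcard : ((Finset.range (n / p)).image (fun j => p * j)).card = n / p := by
    rw [Finset.card_image_of_injective _ (mul_right_injective₀ (by omega : p ≠ 0)),
      Finset.card_range]
  have h1 : n / p ≤ ((Finset.range n).filter (fun m => ¬ n.Coprime m)).card := by
    rw [← hcard]; exact Finset.card_le_card hsub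
  have h2 : ((Finset.range n).filter (fun m => n.Coprime m)).card +
      ((Finset.range n).filter (fun m => ¬ n.Coprime m)).card = n := by
    rw [Finset.card_filter_add_card_filter_not, Finset.card_range]
  have h3 : n.totient = ((Finset.range n).filter (fun m => n.Coprime m)).card := by
    rw [Nat.totient_eq_card_coprime]
  omega

lemma subgroup_mem_of_le_of_card_le {Gr : Type*} [Group Gr] [Fintype Gr]
    {A B : Subgroup Gr} (hle : A ≤ B) (hcard : Nat.card B ≤ Nat.card A)
    {g : Gr} (hg : g ∈ B) : g ∈ A := by
  classical
  have hsub : Finset.univ.filter (fun x => x ∈ A) ⊆ Finset.univ.filter (fun x => x ∈ B) :=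
    fun x hx => Finset.mem_filter.mpr ⟨Finset.mem_univ _, hle (Finset.mem_filter.mp hx).2⟩
  have hA : (Finset.univ.filter (fun x => x ∈ A)).card = Nat.card A := by
    rw [Nat.card_eq_fintype_card, Fintype.card_subtype]
  have hB : (Finset.univ.filter (fun x => x ∈ B)).card = Nat.card B := by
    rw [Nat.card_eq_fintype_card, Fintype.card_subtype]
  have heq := Finset.eq_of_subset_of_card_le hsub (by omega)
  have : g ∈ Finset.univ.filter (fun x => x ∈ B) := Finset.mem_filter.mpr ⟨Finset.mem_univ _, hg⟩
  rw [← heq] at this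
  exact (Finset.mem_filter.mp this).2

end Stmt8Aux

open Stmt8Aux in
/-- If `(G,κ)` is a proper edge coloring of a tree on `n` vertices using
at least 3 colors, then `|𝔊_κ| ≥ n² / (n − φ(n))`, i.e. `|𝔊_κ| · (n − φ(n)) ≥ n²`. -/
theorem stmt_8 {V : Type*} [Fintype V] (G : SimpleGraph V) (hG : G.IsTree)
    (k : ℕ) (hk : 3 ≤ k) (κ : Sym2 V → ℕ) (hκ : IsProperEdgeColoring G k κ) :
    (Fintype.card V) ^ 2 ≤
      Nat.card ↥(coloringGroup G k κ) * (Fintype.card V - Nat.totient (Fintype.card V)) := by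
  classical
  set n := Fintype.card V with hn
  set 𝒢 := coloringGroup G k κ with h𝒢
  -- color classes
  set cls : ℕ → Finset (Sym2 V) := fun a => G.edgeFinset.filter (fun e => κ e = a) with hcls
  have h_cls_mem : ∀ a (e : Sym2 V), e ∈ (cls a).toList ↔ (e ∈ G.edgeSet ∧ κ e = a) := by
    intro a e
    rw [Finset.mem_toList, hcls, Finset.mem_filter, SimpleGraph.mem_edgeFinset]
  set tog : ℕ → Equiv.Perm V := fun a => pprod ((cls a).toList) with htog
  have h_tog_toggle : ∀ a, IsToggle G κ a (tog a) := by
    intro a v w hvw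
    rw [htog, pprod_toggle_eval hκ a ((cls a).toList) (Finset.nodup_toList _)
      (fun e he => ((h_cls_mem a e).mp he).1) (fun e he => ((h_cls_mem a e).mp he).2) v w hvw,
      h_cls_mem, SimpleGraph.mem_edgeSet]
  have h_tog_mem : ∀ a, 1 ≤ a → a ≤ k → tog a ∈ 𝒢 := fun a h1 h2 =>
    Subgroup.subset_closure ⟨a, h1, h2, h_tog_toggle a⟩
  -- the big list
  set L : List (Sym2 V) := ((List.range' 1 k).map (fun a => (cls a).toList)).flatten with hL
  have hLnodup : L.Nodup := by
    rw [hL, List.nodup_flatten]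
    constructor
    · intro l hl
      obtain ⟨a, -, rfl⟩ := List.mem_map.mp hl
      exact Finset.nodup_toList _
    · rw [List.pairwise_map]
      refine List.Pairwise.imp ?_ (List.nodup_range' (s := 1) (n := k) 1 one_pos)
      intro a b hab e hea heb
      have h1 := ((h_cls_mem a e).mp hea).2
      have h2 := ((h_cls_mem b e).mp heb).2
      exact hab (h1 ▸ h2 ▸ rfl)
  have hLedges : ∀ e ∈ L, e ∈ G.edgeSet := by
    intro e he
    rw [hL, List.mem_flatten] at he
    obtain ⟨l, hl, hel⟩ := he
    obtain ⟨a, -, rfl⟩ := List.mem_map.mp hl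
    exact ((h_cls_mem a e).mp hel).1
  have hLcover : ∀ e ∈ G.edgeSet, e ∈ L := by
    intro e he
    rw [hL, List.mem_flatten]
    refine ⟨(cls (κ e)).toList, List.mem_map.mpr ⟨κ e, ?_, rfl⟩, (h_cls_mem _ e).mpr ⟨he, rfl⟩⟩
    have hicc := hκ.1 e he
    rw [Finset.mem_Icc] at hicc
    rw [List.mem_range'_1]
    omega
  set σ : Equiv.Perm V := pprod L with hσ
  have hσeq : σ = ((List.range' 1 k).map tog).prod := by
    rw [hσ, hL, pprod, List.map_flatten, List.prod_flatten, List.map_map, List.map_map]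
    rfl
  have hσmem : σ ∈ 𝒢 := by
    rw [hσeq]
    refine Subgroup.list_prod_mem _ ?_
    intro x hx
    obtain ⟨a, ha, rfl⟩ := List.mem_map.mp hx
    rw [List.mem_range'_1] at ha
    exact h_tog_mem a ha.1 (by omega)
  have htrans : ∀ v w : V, σ.SameCycle v w := by
    intro v w
    have hreach : Reach L v w := by
      obtain ⟨p⟩ := hG.isConnected.preconnected v w
      clear hσeq
      induction p with
      | nil => exact reach_refl L _
      | cons h p ih =>
        exact Relation.ReflTransGen.head (hLcover _ ((SimpleGraph.mem_edgeSet G).mpr h)) ih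
    exact reach_sameCycle G hG L hLnodup hLedges v w hreach
  have hfree : ∀ (i : ℤ) (v : V), (σ ^ i) v = v → σ ^ i = 1 := by
    intro i v hv
    ext w
    obtain ⟨j, hj⟩ := htrans v w
    rw [← hj]
    show (σ ^ i) ((σ ^ j) v) = _
    rw [← Equiv.Perm.mul_apply, ← zpow_add, add_comm, zpow_add, Equiv.Perm.mul_apply, hv]
    rfl
  -- cardinalities
  have hedge_card : G.edgeFinset.card + 1 = n := hG.card_edgeFinset
  have hn1 : 1 ≤ n := by omega
  haveI hne : Nonempty V := Fintype.card_pos_iff.mp (by omega)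
  obtain ⟨v₀⟩ := hne
  set C : Subgroup (Equiv.Perm V) := Subgroup.zpowers σ with hC
  have hCle : C ≤ 𝒢 := Subgroup.zpowers_le.mpr hσmem
  have hCcard : Nat.card C = n := by
    have hbij : Function.Bijective (fun c : C => (c : Equiv.Perm V) v₀) := by
      constructor
      · rintro ⟨g, hg⟩ ⟨g', hg'⟩ hgg
        obtain ⟨i, rfl⟩ := Subgroup.mem_zpowers_iff.mp hg
        obtain ⟨i', rfl⟩ := Subgroup.mem_zpowers_iff.mp hg'
        simp only at hgg
        have hfix : (σ ^ (i - i')) ((σ ^ i') v₀) = (σ ^ i') v₀ := by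
          rw [← Equiv.Perm.mul_apply, ← zpow_add, sub_add_cancel, hgg]
        have := hfree _ _ hfix
        have hσii : σ ^ i = σ ^ i' := by
          have h2 : σ ^ (i - i') * σ ^ i' = σ ^ i := by rw [← zpow_add]; ring_nf
          rw [← h2, this, one_mul]
        exact Subtype.ext hσii
      · intro w
        obtain ⟨i, hi⟩ := htrans v₀ w
        exact ⟨⟨σ ^ i, Subgroup.zpow_mem _ (Subgroup.mem_zpowers σ) i⟩, hi⟩
    rw [Nat.card_eq_of_bijective _ hbij, Nat.card_eq_fintype_card]
  have hord : orderOf σ = n := by rw [← Nat.card_zpowers]; exact hCcard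
    -- minimal color class
  obtain ⟨a₀, ha₀mem, ha₀min⟩ := Finset.exists_min_image (Finset.Icc 1 k)
    (fun a => (cls a).card) ⟨1, Finset.mem_Icc.mpr ⟨le_refl 1, by omega⟩⟩
  set t : Equiv.Perm V := tog a₀ with ht
  set e₀ : ℕ := (cls a₀).card with he₀
  obtain ⟨ha₀1, ha₀k⟩ := Finset.mem_Icc.mp ha₀mem
  have ht_mem : t ∈ 𝒢 := h_tog_mem a₀ ha₀1 ha₀k
  have ht_tog : IsToggle G κ a₀ t := h_tog_toggle a₀
  -- class size sums
  have hsum : ∑ a ∈ Finset.Icc 1 k, (cls a).card = G.edgeFinset.card :=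
    (Finset.card_eq_sum_card_fiberwise
      (fun e he => hκ.1 e (SimpleGraph.mem_edgeFinset.mp he))).symm
  have hpos : ∀ a ∈ Finset.Icc 1 k, 1 ≤ (cls a).card := by
    intro a ha
    obtain ⟨e, heE, heκ⟩ := hκ.2.1 a ha
    exact Finset.card_pos.mpr ⟨e, Finset.mem_filter.mpr ⟨SimpleGraph.mem_edgeFinset.mpr heE, heκ⟩⟩
  have hIcc_card : (Finset.Icc 1 k).card = k := by rw [Nat.card_Icc]; omega
  have hk_le : k ≤ G.edgeFinset.card := by
    have := Finset.card_nsmul_le_sum (Finset.Icc 1 k) (fun a => (cls a).card) 1 hpos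
    rw [hIcc_card, smul_eq_mul, mul_one] at this
    omega
  have hn4 : 4 ≤ n := by omega
  have hmin3 : 3 * e₀ ≤ n - 1 := by
    have h1 := Finset.card_nsmul_le_sum (Finset.Icc 1 k) (fun a => (cls a).card) e₀
      (fun a ha => ha₀min a ha)
    rw [hIcc_card, smul_eq_mul] at h1
    have h2 : 3 * e₀ ≤ k * e₀ := Nat.mul_le_mul_right e₀ hk
    omega
  -- fixed points of t
  set F : Finset V := Finset.univ.filter (fun v => t v = v) with hF
  have hFlb : n ≤ F.card + 2 * e₀ := by
    set M : Finset V := Finset.univ.filter (fun v => ¬ t v = v) with hM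
    have hFM : F.card + M.card = n := by
      rw [hF, hM, Finset.card_filter_add_card_filter_not, Finset.card_univ]
    have hMimg : ∀ v ∈ M, s(v, t v) ∈ cls a₀ := by
      intro v hv
      have hvm : ¬ t v = v := (Finset.mem_filter.mp hv).2
      have := (ht_tog v (t v) (Ne.symm hvm)).mp rfl
      exact Finset.mem_filter.mpr ⟨SimpleGraph.mem_edgeFinset.mpr
        ((SimpleGraph.mem_edgeSet G).mpr this.1), this.2⟩
    have hfib : ∀ z ∈ M.image (fun v => s(v, t v)),
        (M.filter (fun v => s(v, t v) = z)).card ≤ 2 := by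
      intro z hz
      induction z using Sym2.inductionOn with
      | _ x y =>
        have hsub : M.filter (fun v => s(v, t v) = s(x, y)) ⊆ {x, y} := by
          intro v hv
          have hvz := (Finset.mem_filter.mp hv).2
          have hvm : v ∈ s(x, y) := hvz ▸ Sym2.mem_mk_left v (t v)
          rw [Sym2.mem_iff] at hvm
          rcases hvm with rfl | rfl
          · exact Finset.mem_insert_self _ _
          · exact Finset.mem_insert.mpr (Or.inr (Finset.mem_singleton_self _))
        refine (Finset.card_le_card hsub).trans ?_
        refine (Finset.card_insert_le x {y}).trans ?_
        rw [Finset.card_singleton]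
    have h1 : M.card ≤ 2 * (M.image (fun v => s(v, t v))).card :=
      Finset.card_le_mul_card_image M 2 hfib
    have h2 : (M.image (fun v => s(v, t v))).card ≤ e₀ := by
      rw [he₀]
      apply Finset.card_le_card
      intro z hz
      obtain ⟨v, hv, rfl⟩ := Finset.mem_image.mp hz
      exact hMimg v hv
    omega
  -- a moved pair
  obtain ⟨exy, hexE, hexκ⟩ := hκ.2.1 a₀ ha₀mem
  have hmoved : ∃ x₀ y₀ : V, x₀ ≠ y₀ ∧ t x₀ = y₀ ∧ t y₀ = x₀ := by
    induction exy using Sym2.inductionOn with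
    | _ x y =>
      have hadj : G.Adj x y := (SimpleGraph.mem_edgeSet G).mp hexE
      refine ⟨x, y, hadj.ne, ?_, ?_⟩
      · exact (ht_tog x y hadj.ne).mpr ⟨hadj, hexκ⟩
      · exact (ht_tog y x hadj.ne.symm).mpr ⟨hadj.symm, by rwa [Sym2.eq_swap]⟩
  obtain ⟨x₀, y₀, hx₀y₀, htx₀, hty₀⟩ := hmoved
  have hFub : F.card ≤ n - 2 := by
    have hsub : F ⊆ Finset.univ \ {x₀, y₀} := by
      intro w hw
      have hwf : t w = w := (Finset.mem_filter.mp hw).2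
      refine Finset.mem_sdiff.mpr ⟨Finset.mem_univ _, ?_⟩
      intro hmem
      rcases Finset.mem_insert.mp hmem with rfl | hmem2
      · exact hx₀y₀ (htx₀.symm.trans hwf).symm
      · rw [Finset.mem_singleton] at hmem2
        subst hmem2
        exact hx₀y₀ (hty₀.symm.trans hwf)
    have hcard2 : ({x₀, y₀} : Finset V).card = 2 := Finset.card_pair hx₀y₀
    have := Finset.card_le_card hsub
    rw [Finset.card_sdiff_of_subset (Finset.subset_univ _), Finset.card_univ, hcard2] at this
    omega
  have hF3 : n + 2 ≤ 3 * F.card := by omega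
  have ht_ne1 : t ≠ 1 := by
    intro h
    rw [h] at htx₀
    exact hx₀y₀ (by simpa using htx₀)
    -- basic number facts
  have hp2 : 2 ≤ n.minFac := (Nat.minFac_prime (by omega : n ≠ 1)).two_le
  have hpdvd : n.minFac ∣ n := Nat.minFac_dvd n
  have h𝒢pos : 0 < Nat.card 𝒢 := Nat.card_pos
  have hdvd : n ∣ Nat.card 𝒢 := hCcard ▸ Subgroup.card_dvd_of_le hCle
  have ht_notin_C : t ∉ C := by
    intro htC
    obtain ⟨i, hi⟩ := Subgroup.mem_zpowers_iff.mp htC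
    obtain ⟨v, hvF⟩ := Finset.card_pos.mp (show 0 < F.card by omega)
    have hv : t v = v := (Finset.mem_filter.mp hvF).2
    rw [← hi] at hv
    have h1 := hfree i v hv
    rw [hi] at h1
    exact ht_ne1 h1
  have hmain : n * n.minFac ≤ Nat.card 𝒢 := by
    by_cases hpm : n.minFac = 2
    · rw [hpm]
      have hneq : Nat.card 𝒢 ≠ n := by
        intro h
        exact ht_notin_C (subgroup_mem_of_le_of_card_le hCle (by rw [h, hCcard]) ht_mem)
      obtain ⟨m, hm⟩ := hdvd
      have hm1 : m ≠ 1 := fun h1 => hneq (by rw [hm, h1, mul_one])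
      have hm0 : m ≠ 0 := by intro h0; rw [hm, h0, mul_zero] at h𝒢pos; omega
      have hm2 : 2 ≤ m := by omega
      rw [hm]
      exact Nat.mul_le_mul_left n hm2
    · have hp3 : 3 ≤ n.minFac := by omega
      by_cases hcj : t * σ * t⁻¹ ∈ C
      · -- Case B: conjugation normalizes C; derive a contradiction
        exfalso
        obtain ⟨u, hu⟩ := Subgroup.mem_zpowers_iff.mp hcj
        obtain ⟨v, hvF⟩ := Finset.card_pos.mp (show 0 < F.card by omega)
        have hv : t v = v := (Finset.mem_filter.mp hvF).2
        choose J hJ using fun w => htrans v w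
        have hconj : ∀ i : ℤ, t * σ ^ i * t⁻¹ = σ ^ (u * i) := by
          intro i
          calc t * σ ^ i * t⁻¹ = (t * σ * t⁻¹) ^ i := (conj_zpow).symm
            _ = (σ ^ u) ^ i := by rw [hu]
            _ = σ ^ (u * i) := by rw [← zpow_mul]
        have hiff : ∀ w : V, t w = w ↔ σ ^ ((u - 1) * J w) = 1 := by
          intro w
          have h1 : t w = (σ ^ (u * J w)) v := by
            conv_lhs => rw [← hJ w]
            calc t ((σ ^ J w) v) = (t * σ ^ J w * t⁻¹) (t v) := by
                  simp [Equiv.Perm.mul_apply]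
              _ = (σ ^ (u * J w)) (t v) := by rw [hconj]
              _ = (σ ^ (u * J w)) v := by rw [hv]
          constructor
          · intro hw
            have h2 : (σ ^ (u * J w)) v = (σ ^ (J w)) v := by
              rw [← h1, hw, hJ w]
            have h3 : (σ ^ ((u - 1) * J w)) ((σ ^ (J w)) v) = (σ ^ (J w)) v := by
              rw [← Equiv.Perm.mul_apply, ← zpow_add]
              have he : (u - 1) * J w + J w = u * J w := by ring
              rw [he, h2]
            exact hfree _ _ h3
          · intro h1eq
            have h3 : σ ^ (u * J w) = σ ^ (J w) := by
              have he : u * J w = (u - 1) * J w + J w := by ring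
              rw [he, zpow_add, h1eq, one_mul]
            rw [h1, h3, hJ w]
        haveI : NeZero n := ⟨by omega⟩
        set φu : ZMod n →+ ZMod n := AddMonoidHom.mulLeft ((u : ZMod n) - 1) with hφu
        set K := φu.ker with hKdef
        have hcast : ∀ w : V, t w = w ↔ (((J w : ℤ) : ZMod n) ∈ K) := by
          intro w
          rw [hiff w, hKdef, AddMonoidHom.mem_ker, hφu]
          show _ ↔ ((u : ZMod n) - 1) * ((J w : ℤ) : ZMod n) = 0
          have hcc : ((u : ZMod n) - 1) * ((J w : ℤ) : ZMod n) =
              (((u - 1) * J w : ℤ) : ZMod n) := by push_cast; ring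
          rw [hcc, ZMod.intCast_zmod_eq_zero_iff_dvd, ← hord, orderOf_dvd_iff_zpow_eq_one]
        set KF : Finset (ZMod n) := Finset.univ.filter (fun z => z ∈ K) with hKF
        have hKFcard : KF.card = Nat.card K := by
          rw [Nat.card_eq_fintype_card, Fintype.card_subtype]
        have hinj : F.card ≤ KF.card := by
          apply Finset.card_le_card_of_injOn (fun w => ((J w : ℤ) : ZMod n))
          · intro w hw
            exact Finset.mem_filter.mpr ⟨Finset.mem_univ _,
              (hcast w).mp (Finset.mem_filter.mp hw).2⟩
          · intro w hw w' hw' heq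
            have hdvd2 : (n : ℤ) ∣ J w' - J w := by
              rw [ZMod.intCast_eq_intCast_iff] at heq
              exact Int.ModEq.dvd heq
            have h1 : σ ^ (J w' - J w) = 1 := by
              rw [← orderOf_dvd_iff_zpow_eq_one, hord]
              exact_mod_cast hdvd2
            have h2 : σ ^ (J w') = σ ^ (J w) := by
              have h3 : σ ^ (J w' - J w) * σ ^ (J w) = σ ^ (J w') := by
                rw [← zpow_add]; ring_nf
              rw [← h3, h1, one_mul]
            rw [← hJ w, ← hJ w', h2]
        have hKdvd : Nat.card K ∣ n := by
          have h1 : Nat.card K ∣ Nat.card (ZMod n) := AddSubgroup.card_addSubgroup_dvd_card K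
          rwa [show Nat.card (ZMod n) = n by rw [Nat.card_eq_fintype_card, ZMod.card]] at h1
        have hKne : Nat.card K ≠ n := by
          intro hKn
          have hKtop : K = ⊤ := AddSubgroup.eq_top_of_card_eq K
            (by rw [hKn, Nat.card_eq_fintype_card, ZMod.card])
          have hF_all : t x₀ = x₀ := by
            rw [hcast x₀, hKtop]
            exact AddSubgroup.mem_top _
          exact hx₀y₀ (htx₀.symm.trans hF_all).symm
        obtain ⟨m, hm⟩ := hKdvd
        have hm0 : m ≠ 0 := by intro h0; rw [h0, mul_zero] at hm; omega
        have hm1 : m ≠ 1 := fun h1 => hKne (by rw [h1, mul_one] at hm; exact hm.symm)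
        have hFK : n + 2 ≤ 3 * Nat.card K := by rw [← hKFcard]; omega
        have hm3 : m = 2 := by
          by_contra hne2
          have hm3' : 3 ≤ m := by omega
          have h4 : 3 * Nat.card K ≤ n := by
            calc 3 * Nat.card K = Nat.card K * 3 := by ring
              _ ≤ Nat.card K * m := Nat.mul_le_mul_left _ hm3'
              _ = n := hm.symm
          omega
        have h2dvd : 2 ∣ n := ⟨Nat.card K, by rw [hm3] at hm; omega⟩
        have := Nat.minFac_le_of_dvd (le_refl 2) h2dvd
        omega
      · -- Case A: double coset bound
        set Ct := Subgroup.map (MulAut.conj t).toMonoidHom C with hCt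
        have hCtcard : Nat.card Ct = n := by
          rw [← hCcard]
          exact (Nat.card_congr (Subgroup.equivMapOfInjective C
            (MulAut.conj t).toMonoidHom ((MulAut.conj t).injective)).toEquiv).symm
        set D := C ⊓ Ct with hD
        have hDdvd : Nat.card D ∣ n := hCcard ▸ Subgroup.card_dvd_of_le inf_le_left
        have hDpos : 0 < Nat.card D := Nat.card_pos
        have hDne : Nat.card D ≠ n := by
          intro hDn
          have hCD : ∀ g ∈ C, g ∈ D := fun g hg =>
            subgroup_mem_of_le_of_card_le inf_le_left (by rw [hDn, hCcard]) hg
          have hCle2 : C ≤ Ct := fun g hg => (Subgroup.mem_inf.mp (hCD g hg)).2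
          have htσ : t * σ * t⁻¹ ∈ Ct := Subgroup.mem_map.mpr
            ⟨σ, Subgroup.mem_zpowers σ, by rw [MulEquiv.coe_toMonoidHom, MulAut.conj_apply]⟩
          exact hcj (subgroup_mem_of_le_of_card_le hCle2 (by rw [hCtcard, hCcard]) htσ)
        have hcount := doubleCoset_bound C 𝒢 t hCle ht_mem
        rw [hCcard, ← hCt, ← hD] at hcount
        obtain ⟨m, hm⟩ := hDdvd
        have hm0 : m ≠ 0 := by intro h0; rw [h0, mul_zero] at hm; omega
        have hm1 : m ≠ 1 := fun h1 => hDne (by rw [h1, mul_one] at hm; exact hm.symm)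
        have hpmle : n.minFac ≤ m := Nat.minFac_le_of_dvd (by omega)
          ⟨Nat.card D, by rw [hm]; ring⟩
        have hDle : Nat.card D ≤ n / n.minFac := by
          have h1 : Nat.card D = n / m := by
            rw [hm, Nat.mul_div_cancel _ (by omega : 0 < m)]
          rw [h1]
          exact Nat.div_le_div_left hpmle (by omega)
        have hq : n.minFac * (n / n.minFac) = n := Nat.mul_div_cancel' hpdvd
        have h2 : (n / n.minFac) * (n.minFac * n) ≤ (n / n.minFac) * Nat.card 𝒢 := by
          calc (n / n.minFac) * (n.minFac * n) = (n.minFac * (n / n.minFac)) * n := by ring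
            _ = n * n := by rw [hq]
            _ ≤ Nat.card D * Nat.card 𝒢 := hcount
            _ ≤ (n / n.minFac) * Nat.card 𝒢 := Nat.mul_le_mul_right _ hDle
        have hdivpos : 0 < n / n.minFac :=
          Nat.div_pos (Nat.minFac_le (by omega)) (by omega)
        have h3 := le_of_mul_le_mul_left h2 hdivpos
        calc n * n.minFac = n.minFac * n := by ring
          _ ≤ Nat.card 𝒢 := h3
  have hphi := totient_bound (by omega : 2 ≤ n)
  calc n ^ 2 = n * n.minFac * (n / n.minFac) := by
        rw [mul_assoc, Nat.mul_div_cancel' hpdvd, sq]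
    _ ≤ Nat.card 𝒢 * (n - n.totient) := Nat.mul_le_mul hmain hphi
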